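/- Let f ∈ C¹[x₁,x_N] with f(x_i) = y_i, and let s be the classical rational cubic spline defined piecewise on [x_i, x_{i+1}] by s(x) = [y_i(1−φ)³ + (r_i y_i + h_i d_i)φ(1−φ)² + (r_i y_{i+1} − h_i d_{i+1})φ²(1−φ) + y_{i+1}φ³]/[1+(r_i−3)φ(1−φ)], φ = (x−x_i)/h_i, with r_i > −1. Then ‖f − s‖_∞ ≤ (1/(4c)) h |d|_∞ + (1/(4c)) ω(f; h)(|r|_∞ + 4), where h = max h_i, c = min c_i with c_i as in the denominator lower bound, |d|_∞ = max |d_i|, |r|_∞ = max |r_i|, and ω(f; h) is the modulus of continuity of f. -/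
import Mathlib


/-- Modulus of continuity of `f` on `[a, b]` at scale `h`. -/
noncomputable def modulusOfContinuity (f : ℝ → ℝ) (a b h : ℝ) : ℝ :=
  sSup {d : ℝ | ∃ u ∈ Set.Icc a b, ∃ v ∈ Set.Icc a b, |u - v| ≤ h ∧ d = |f u - f v|}

set_option maxHeartbeats 1000000 in
theorem stmt_7
    (N : ℕ) (hN : 2 ≤ N)
    (x : ℕ → ℝ)
    (hmono : ∀ i, 1 ≤ i → i < N → x i < x (i + 1))
    (f : ℝ → ℝ) (hf : ContDiffOn ℝ 1 f (Set.Icc (x 1) (x N)))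
    (y d r : ℕ → ℝ)
    (hy : ∀ i, 1 ≤ i → i ≤ N → y i = f (x i))
    (hr : ∀ i, 1 ≤ i → i < N → r i > -1)
    (s : ℝ → ℝ)
    (hs : ∀ i, 1 ≤ i → i < N → ∀ u ∈ Set.Icc (x i) (x (i + 1)),
      s u = (y i * (1 - (u - x i) / (x (i + 1) - x i))^3
          + (r i * y i + (x (i + 1) - x i) * d i) *
              ((u - x i) / (x (i + 1) - x i)) * (1 - (u - x i) / (x (i + 1) - x i))^2
          + (r i * y (i + 1) - (x (i + 1) - x i) * d (i + 1)) *
              ((u - x i) / (x (i + 1) - x i))^2 * (1 - (u - x i) / (x (i + 1) - x i))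
          + y (i + 1) * ((u - x i) / (x (i + 1) - x i))^3) /
          (1 + (r i - 3) * ((u - x i) / (x (i + 1) - x i)) *
            (1 - (u - x i) / (x (i + 1) - x i))))
    (h c dmax rmax : ℝ) (hc0 : 0 < c)
    (hc : ∀ i, 1 ≤ i → i < N → c ≤ (if r i < 3 then (1 + r i) / 4 else 1))
    (hh : ∀ i, 1 ≤ i → i < N → x (i + 1) - x i ≤ h)
    (hd : ∀ i, 1 ≤ i → i ≤ N → |d i| ≤ dmax)
    (hrmax : ∀ i, 1 ≤ i → i < N → |r i| ≤ rmax) :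
    ∀ u ∈ Set.Icc (x 1) (x N),
      |f u - s u| ≤ (1 / (4 * c)) * h * dmax
        + (1 / (4 * c)) * modulusOfContinuity f (x 1) (x N) h * (rmax + 4) := by
  classical
  -- monotonicity of the nodes
  have hxmono : ∀ a b : ℕ, 1 ≤ a → a ≤ b → b ≤ N → x a ≤ x b := by
    intro a b ha hab hb
    induction b with
    | zero => omega
    | succ n ih =>
      rcases eq_or_lt_of_le hab with rfl | hlt
      · exact le_refl _
      · have han : a ≤ n := by omega
        have h1 : x a ≤ x n := ih han (by omega)
        have h2 : x n < x (n + 1) := hmono n (by omega) (by omega)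
        linarith
  have hx1N : x 1 ≤ x N := hxmono 1 N le_rfl (by omega) le_rfl
  have h0 : 0 ≤ h := by
    have := hh 1 le_rfl (by omega)
    have := hmono 1 le_rfl (by omega)
    linarith
  -- boundedness of f on the interval
  obtain ⟨M, hM⟩ : ∃ M, ∀ z ∈ Set.Icc (x 1) (x N), |f z| ≤ M :=
    (isCompact_Icc).exists_bound_of_continuousOn hf.continuousOn
  set S : Set ℝ := {e : ℝ | ∃ u ∈ Set.Icc (x 1) (x N), ∃ v ∈ Set.Icc (x 1) (x N),
      |u - v| ≤ h ∧ e = |f u - f v|} with hS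
  have hbdd : BddAbove S := by
    refine ⟨2 * M, ?_⟩
    rintro e ⟨u, hu, v, hv, -, rfl⟩
    have := hM u hu
    have := hM v hv
    calc |f u - f v| ≤ |f u| + |f v| := abs_sub _ _
      _ ≤ 2 * M := by linarith
  have hWdef : modulusOfContinuity f (x 1) (x N) h = sSup S := rfl
  set W := modulusOfContinuity f (x 1) (x N) h with hWeq
  have hωle : ∀ u ∈ Set.Icc (x 1) (x N), ∀ v ∈ Set.Icc (x 1) (x N),
      |u - v| ≤ h → |f u - f v| ≤ W := by
    intro u hu v hv huv
    exact le_csSup hbdd ⟨u, hu, v, hv, huv, rfl⟩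
  have hW0 : 0 ≤ W := by
    have : (0 : ℝ) = |f (x 1) - f (x 1)| := by simp
    calc (0 : ℝ) = |f (x 1) - f (x 1)| := this
      _ ≤ W := hωle _ ⟨le_rfl, hx1N⟩ _ ⟨le_rfl, hx1N⟩ (by simpa using h0)
  intro u hu
  -- locate u in a subinterval
  set P : ℕ → Prop := fun j => 1 ≤ j ∧ x j ≤ u with hP
  set i := Nat.findGreatest P (N - 1) with hidef
  have hP1 : P 1 := ⟨le_rfl, hu.1⟩
  have hi1 : 1 ≤ i := Nat.le_findGreatest (by omega) hP1
  have hiN1 : i ≤ N - 1 := Nat.findGreatest_le _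
  have hiN : i < N := by omega
  have hPi : P i := Nat.findGreatest_spec (m := 1) (by omega) hP1
  have hxiu : x i ≤ u := hPi.2
  have hui1 : u ≤ x (i + 1) := by
    rcases eq_or_lt_of_le hiN1 with heq | hlt
    · have : i + 1 = N := by omega
      rw [this]; exact hu.2
    · have hnot : ¬ P (i + 1) := Nat.findGreatest_is_greatest (n := N - 1) (P := P) (by omega) (by omega)
      have : ¬ x (i + 1) ≤ u := fun hcon => hnot ⟨by omega, hcon⟩
      linarith
  have huIcc : u ∈ Set.Icc (x i) (x (i + 1)) := ⟨hxiu, hui1⟩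
  -- abbreviations
  have hhi0 : 0 < x (i + 1) - x i := by
    have := hmono i hi1 hiN
    linarith
  have hhih : x (i + 1) - x i ≤ h := hh i hi1 hiN
  -- modulus bounds
  have hxiIcc : x i ∈ Set.Icc (x 1) (x N) :=
    ⟨hxmono 1 i le_rfl hi1 (by omega), hxmono i N hi1 (by omega) le_rfl⟩
  have hxi1Icc : x (i + 1) ∈ Set.Icc (x 1) (x N) :=
    ⟨hxmono 1 (i + 1) le_rfl (by omega) (by omega), hxmono (i + 1) N (by omega) (by omega) le_rfl⟩
  have huIcc' : u ∈ Set.Icc (x 1) (x N) := hu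
  have ha : |f u - y i| ≤ W := by
    rw [hy i hi1 (by omega)]
    refine hωle u huIcc' (x i) hxiIcc ?_
    rw [abs_of_nonneg (by linarith)]
    linarith
  have hb : |f u - y (i + 1)| ≤ W := by
    rw [hy (i + 1) (by omega) (by omega)]
    refine hωle u huIcc' (x (i + 1)) hxi1Icc ?_
    rw [abs_of_nonpos (by linarith)]
    linarith
  have hdi : |d i| ≤ dmax := hd i hi1 (by omega)
  have hdi1 : |d (i + 1)| ≤ dmax := hd (i + 1) (by omega) (by omega)
  have hri : |r i| ≤ rmax := hrmax i hi1 hiN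
  have hdmax0 : 0 ≤ dmax := le_trans (abs_nonneg _) hdi
  have hrmax0 : 0 ≤ rmax := le_trans (abs_nonneg _) hri
  -- rewrite s u
  rw [hs i hi1 hiN u huIcc]
  set t : ℝ := (u - x i) / (x (i + 1) - x i) with htdef
  have ht0 : 0 ≤ t := div_nonneg (by linarith) (by linarith)
  have ht1 : t ≤ 1 := by
    rw [htdef, div_le_one hhi0]
    linarith
  set D : ℝ := 1 + (r i - 3) * t * (1 - t) with hDdef
  have hcD : c ≤ D := by
    have hci := hc i hi1 hiN
    by_cases hr3 : r i < 3
    · rw [if_pos hr3] at hci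
      nlinarith [sq_nonneg (2 * t - 1), mul_nonneg ht0 (by linarith : (0:ℝ) ≤ 1 - t)]
    · rw [if_neg hr3] at hci
      push_neg at hr3
      nlinarith [mul_nonneg ht0 (by linarith : (0:ℝ) ≤ 1 - t)]
  have hD0 : 0 < D := lt_of_lt_of_le hc0 hcD
  have hkey : f u - (y i * (1 - t) ^ 3 +
        (r i * y i + (x (i + 1) - x i) * d i) * t * (1 - t) ^ 2 +
        (r i * y (i + 1) - (x (i + 1) - x i) * d (i + 1)) * t ^ 2 * (1 - t) +
        y (i + 1) * t ^ 3) / D =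
      ((f u - y i) * (1 - t) ^ 3 +
        (r i * (f u - y i) - (x (i + 1) - x i) * d i) * (t * (1 - t) ^ 2) +
        (r i * (f u - y (i + 1)) + (x (i + 1) - x i) * d (i + 1)) * (t ^ 2 * (1 - t)) +
        (f u - y (i + 1)) * t ^ 3) / D := by
    rw [eq_div_iff hD0.ne', sub_mul, div_mul_cancel₀ _ hD0.ne', hDdef]
    ring
  rw [hkey]
  set A : ℝ := f u - y i with hA
  set B : ℝ := f u - y (i + 1) with hB
  set E : ℝ := A * (1 - t) ^ 3 +
      (r i * A - (x (i + 1) - x i) * d i) * (t * (1 - t) ^ 2) +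
      (r i * B + (x (i + 1) - x i) * d (i + 1)) * (t ^ 2 * (1 - t)) +
      B * t ^ 3 with hE
  have h1t : 0 ≤ 1 - t := by linarith
  have hm1 : |r i * A - (x (i + 1) - x i) * d i| ≤ rmax * W + h * dmax := by
    calc |r i * A - (x (i + 1) - x i) * d i|
        ≤ |r i * A| + |(x (i + 1) - x i) * d i| := abs_sub _ _
      _ = |r i| * |A| + |x (i + 1) - x i| * |d i| := by rw [abs_mul, abs_mul]
      _ ≤ rmax * W + h * dmax := by
          rw [abs_of_pos hhi0]
          gcongr <;> exact abs_nonneg _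
  have hm2 : |r i * B + (x (i + 1) - x i) * d (i + 1)| ≤ rmax * W + h * dmax := by
    calc |r i * B + (x (i + 1) - x i) * d (i + 1)|
        ≤ |r i * B| + |(x (i + 1) - x i) * d (i + 1)| := abs_add_le _ _
      _ = |r i| * |B| + |x (i + 1) - x i| * |d (i + 1)| := by rw [abs_mul, abs_mul]
      _ ≤ rmax * W + h * dmax := by
          rw [abs_of_pos hhi0]
          gcongr <;> exact abs_nonneg _
  have hEbound : |E| ≤ W + (rmax * W + h * dmax) / 4 := by
    have e1 : |A * (1 - t) ^ 3| ≤ W * (1 - t) ^ 3 := by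
      rw [abs_mul, abs_of_nonneg (by positivity : (0:ℝ) ≤ (1 - t) ^ 3)]
      gcongr
    have e2 : |(r i * A - (x (i + 1) - x i) * d i) * (t * (1 - t) ^ 2)| ≤
        (rmax * W + h * dmax) * (t * (1 - t) ^ 2) := by
      rw [abs_mul, abs_of_nonneg (by positivity : (0:ℝ) ≤ t * (1 - t) ^ 2)]
      gcongr
    have e3 : |(r i * B + (x (i + 1) - x i) * d (i + 1)) * (t ^ 2 * (1 - t))| ≤
        (rmax * W + h * dmax) * (t ^ 2 * (1 - t)) := by
      rw [abs_mul, abs_of_nonneg (by positivity : (0:ℝ) ≤ t ^ 2 * (1 - t))]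
      gcongr
    have e4 : |B * t ^ 3| ≤ W * t ^ 3 := by
      rw [abs_mul, abs_of_nonneg (by positivity : (0:ℝ) ≤ t ^ 3)]
      gcongr
    have habs : |E| ≤ W * (1 - t) ^ 3 + (rmax * W + h * dmax) * (t * (1 - t) ^ 2) +
        (rmax * W + h * dmax) * (t ^ 2 * (1 - t)) + W * t ^ 3 := by
      calc |E| ≤ |A * (1 - t) ^ 3 +
            (r i * A - (x (i + 1) - x i) * d i) * (t * (1 - t) ^ 2) +
            (r i * B + (x (i + 1) - x i) * d (i + 1)) * (t ^ 2 * (1 - t))| + |B * t ^ 3| := by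
              rw [hE]; exact abs_add_le _ _
        _ ≤ |A * (1 - t) ^ 3 +
            (r i * A - (x (i + 1) - x i) * d i) * (t * (1 - t) ^ 2)| +
            |(r i * B + (x (i + 1) - x i) * d (i + 1)) * (t ^ 2 * (1 - t))| + |B * t ^ 3| := by
              gcongr; exact abs_add_le _ _
        _ ≤ |A * (1 - t) ^ 3| +
            |(r i * A - (x (i + 1) - x i) * d i) * (t * (1 - t) ^ 2)| +
            |(r i * B + (x (i + 1) - x i) * d (i + 1)) * (t ^ 2 * (1 - t))| + |B * t ^ 3| := by
              gcongr; exact abs_add_le _ _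
        _ ≤ _ := by linarith
    have hMnn : 0 ≤ rmax * W + h * dmax :=
      add_nonneg (mul_nonneg hrmax0 hW0) (mul_nonneg h0 hdmax0)
    nlinarith [mul_nonneg hMnn (sq_nonneg (2 * t - 1)),
      mul_nonneg hW0 (mul_nonneg ht0 h1t), sq_nonneg t, sq_nonneg (1 - t)]
  have hEnn : (0 : ℝ) ≤ W + (rmax * W + h * dmax) / 4 := le_trans (abs_nonneg _) hEbound
  calc |E / D| = |E| / D := by rw [abs_div, abs_of_pos hD0]
    _ ≤ (W + (rmax * W + h * dmax) / 4) / c := div_le_div₀ hEnn hEbound hc0 hcD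
    _ = 1 / (4 * c) * h * dmax + 1 / (4 * c) * W * (rmax + 4) := by
        field_simp
        ring
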